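/- Every tuple (c_1,...,c_n) of non-negative integers is realized as the coefficient-powers tuple of some element of the image of the structure monoid of a finite cycle set of size n under the monomial representation; i.e., there is an element of Θ(M) whose diagonal part is diag(q^{c_1},...,q^{c_n}). -/

import Mathlib

/-- Dehornoy's `Ω` expression: `Omega op k t` is `Ω_{k+1}(t 0, …, t k)`,
defined by `Ω_1(x) = x` and
`Ω_k(x_1,…,x_k) = Ω_{k-1}(x_1,…,x_{k-1}) * Ω_{k-1}(x_1,…,x_{k-2},x_k)`. -/
def Omega {S : Type*} (op : S → S → S) : (k : ℕ) → (Fin (k + 1) → S) → S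
  | 0, t => t 0
  | k + 1, t =>
      op (Omega op k fun i => t i.castSucc)
        (Omega op k fun i =>
          if i = Fin.last k then t (Fin.last (k + 1)) else t i.castSucc)

/-- Dehornoy's `Π` expression: `PiExpr op ι k t = ι(Ω_1(t_1)) ⋯ ι(Ω_k(t_1,…,t_k))`. -/
def PiExpr {S M : Type*} [Monoid M] (op : S → S → S) (ι : S → M) :
    (k : ℕ) → (Fin k → S) → M
  | 0, _ => 1
  | k + 1, t => PiExpr op ι k (fun i => t i.castSucc) * ι (Omega op k t)

/-- The defining relations of the structure monoid: `s (s*t) = t (t*s)`. -/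
def csRel {S : Type*} (op : S → S → S) (a b : FreeMonoid S) : Prop :=
  ∃ s t : S, a = FreeMonoid.of s * FreeMonoid.of (op s t) ∧
    b = FreeMonoid.of t * FreeMonoid.of (op t s)

/-- The structure monoid `⟨S ∣ s(s*t) = t(t*s)⟩⁺` of a cycle set. -/
abbrev StructureMonoid {S : Type*} (op : S → S → S) := (conGen (csRel op)).Quotient

/-- The canonical generators of the structure monoid. -/
def mkM {S : Type*} (op : S → S → S) (s : S) : StructureMonoid op :=
  (conGen (csRel op)).mk' (FreeMonoid.of s)

/-- The permutation matrix of `σ`: row `i` has a `1` in column `σ i`. -/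
def Pmat {ι : Type*} [DecidableEq ι] (R : Type*) [Semiring R] (σ : Equiv.Perm ι) :
    Matrix ι ι R := Matrix.of fun i j => if j = σ i then 1 else 0

/-- The diagonal matrix `D_s = diag(1,…,q,…,1)` with `q` in position `s`. -/
noncomputable def Dmat {S : Type*} [DecidableEq S] (s : S) : Matrix S S (Polynomial ℚ) :=
  Matrix.diagonal fun t => if t = s then Polynomial.X else 1

/-- The permutation `ψ(s) : t ↦ s * t` attached to an element of a cycle set. -/
noncomputable def psi {S : Type*} (op : S → S → S) (hbij : ∀ s : S, Function.Bijective (op s))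
    (s : S) : Equiv.Perm S := Equiv.ofBijective (op s) (hbij s)

/-- The monomial matrix `Θ(s) = D_s P_{ψ(s)}` associated to a generator. -/
noncomputable def theta {S : Type*} [Fintype S] [DecidableEq S] (op : S → S → S)
    (hbij : ∀ s : S, Function.Bijective (op s)) (s : S) : Matrix S S (Polynomial ℚ) :=
  Dmat s * Pmat (Polynomial ℚ) (psi op hbij s)

lemma Pmat_one {ι : Type*} [DecidableEq ι] (R : Type*) [Semiring R] :
    Pmat R (1 : Equiv.Perm ι) = 1 := by
  ext i j
  simp [Pmat, Matrix.one_apply, eq_comm]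

lemma Pmat_mul_Pmat {ι : Type*} [DecidableEq ι] [Fintype ι] (R : Type*) [Semiring R]
    (σ τ : Equiv.Perm ι) : Pmat R σ * Pmat R τ = Pmat R (σ.trans τ) := by
  ext i j
  simp only [Pmat, Matrix.mul_apply, Matrix.of_apply]
  rw [Finset.sum_eq_single (σ i)] <;> simp +contextual <;> rfl

lemma Pmat_mul_diagonal {ι : Type*} [DecidableEq ι] [Fintype ι] {R : Type*} [Semiring R]
    (σ : Equiv.Perm ι) (d : ι → R) :
    Pmat R σ * Matrix.diagonal d = Matrix.diagonal (fun i => d (σ i)) * Pmat R σ := by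
  ext i j
  simp only [Pmat, Matrix.mul_apply, Matrix.of_apply, Matrix.diagonal_apply, ite_mul, mul_ite,
    one_mul, zero_mul, mul_one, mul_zero]
  rw [Finset.sum_eq_single (σ i), Finset.sum_eq_single i] <;> simp +contextual [eq_comm]

/-- Every tuple of non-negative integers is realized as the coefficient-powers tuple of
some element of the image of the structure monoid under the monomial representation. -/
theorem exists_coefficient_powers {S : Type*} [Fintype S] [DecidableEq S] (op : S → S → S)
    (hbij : ∀ s : S, Function.Bijective (op s))
    (hcs : ∀ s t u : S, op (op s t) (op s u) = op (op t s) (op t u))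
    (Θ : StructureMonoid op →* Matrix S S (Polynomial ℚ))
    (hΘ : ∀ s : S, Θ (mkM op s) = theta op hbij s)
    (c : S → ℕ) :
    ∃ (f : StructureMonoid op) (σ : Equiv.Perm S),
      Θ f = Matrix.diagonal (fun j => (Polynomial.X : Polynomial ℚ) ^ c j) *
        Pmat (Polynomial ℚ) σ := by
  suffices h : ∀ (n : ℕ) (c : S → ℕ), (∑ j, c j) = n →
      ∃ (f : StructureMonoid op) (σ : Equiv.Perm S),
        Θ f = Matrix.diagonal (fun j => (Polynomial.X : Polynomial ℚ) ^ c j) *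
          Pmat (Polynomial ℚ) σ from h _ c rfl
  intro n
  induction n with
  | zero =>
    intro c hc
    refine ⟨1, 1, ?_⟩
    have hz : ∀ j, c j = 0 := by
      intro j
      have := Finset.sum_eq_zero_iff.mp hc
      exact this j (Finset.mem_univ j)
    simp [hz, Pmat_one, Matrix.diagonal_one]
  | succ n ih =>
    intro c hc
    have : ∃ t, c t ≠ 0 := by
      by_contra h
      push_neg at h
      simp [h] at hc
    obtain ⟨t, ht⟩ := this
    set c' : S → ℕ := Function.update c t (c t - 1) with hc'
    have hsum : (∑ j, c' j) = n := by
      have h1 : (∑ j, c' j) = (c t - 1) + ∑ j ∈ Finset.univ \ {t}, c j := by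
        rw [hc', Finset.sum_update_of_mem (Finset.mem_univ t)]
      have h2 : (∑ j, c j) = (∑ j ∈ Finset.univ \ {t}, c j) + c t :=
        Finset.sum_eq_sum_sdiff_singleton_add (Finset.mem_univ t) c
      omega
    obtain ⟨f, σ, hf⟩ := ih c' hsum
    refine ⟨f * mkM op (σ t), σ.trans (psi op hbij (σ t)), ?_⟩
    rw [map_mul, hf, hΘ, theta, Dmat]
    rw [mul_assoc, ← mul_assoc (Pmat (Polynomial ℚ) σ), Pmat_mul_diagonal,
      mul_assoc, Pmat_mul_Pmat, ← mul_assoc, Matrix.diagonal_mul_diagonal]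
    congr 1
    refine congrArg Matrix.diagonal (funext fun j => ?_)
    by_cases hj : j = t
    · subst hj
      simp only [hc', Function.update_self, if_pos rfl, eq_self_iff_true, if_true]
      rw [← pow_succ]
      congr 1
      omega
    · have : ¬ σ j = σ t := fun h => hj (σ.injective h)
      simp [hc', Function.update_apply, hj, this]
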